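/- Let A be a unital Banach algebra satisfying the small-norm stable rank condition at level n. Then the topological stable rank of A is at most n, i.e. Lg_n(A) is dense in A^n. More precisely, the condition of Theorem 2.6(ii) holds: for every ε > 0 and (a_1,...,a_{n+1}) ∈ Lg_{n+1}(A) there exist c_i with (a_i + c_i a_{n+1})_i ∈ Lg_n(A) and ‖c_i a_{n+1}‖ < ε. -/
import Mathlib


/-- `Lg n A`: the set of `n`-tuples generating `A` as a left ideal. -/
def Lg (A : Type*) [Ring A] (n : ℕ) : Set (Fin n → A) :=
  {a | ∃ w : Fin n → A, ∑ i, w i * a i = 1}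

/-- In a unital Banach algebra, the small-norm stable rank condition at level `n` implies the
condition of Theorem 2.6(ii) at level `n` and the density of `Lg_n(A)` in `A^n`
(i.e. `tsr(A) ≤ n`). -/
theorem stmt_7 (A : Type*) [NormedRing A] [NormedAlgebra ℂ A] [CompleteSpace A] (n : ℕ)
    (hssr : ∀ ε > (0 : ℝ), ∀ a : Fin (n + 1) → A, a ∈ Lg A (n + 1) →
      ∃ c : Fin n → A, (∀ i, ‖c i‖ < ε) ∧
        (fun i : Fin n => a i.castSucc + c i * a (Fin.last n)) ∈ Lg A n) :
    (∀ ε > (0 : ℝ), ∀ a : Fin (n + 1) → A, a ∈ Lg A (n + 1) →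
      ∃ c : Fin n → A, (∀ i, ‖c i * a (Fin.last n)‖ < ε) ∧
        (fun i : Fin n => a i.castSucc + c i * a (Fin.last n)) ∈ Lg A n) ∧
      Dense (Lg A n) := by
  constructor
  · intro ε hε a ha
    set M := ‖a (Fin.last n)‖ + 1 with hM
    have hMpos : (0 : ℝ) < M := by
      have := norm_nonneg (a (Fin.last n)); linarith
    obtain ⟨c, hc, hmem⟩ := hssr (ε / M) (div_pos hε hMpos) a ha
    refine ⟨c, fun i => ?_, hmem⟩
    calc ‖c i * a (Fin.last n)‖ ≤ ‖c i‖ * ‖a (Fin.last n)‖ := norm_mul_le _ _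
      _ ≤ ‖c i‖ * M := by
          have := norm_nonneg (c i)
          have : ‖a (Fin.last n)‖ ≤ M := by simp [hM]
          nlinarith [norm_nonneg (c i)]
      _ < (ε / M) * M := by
          exact mul_lt_mul_of_pos_right (hc i) hMpos
      _ = ε := by field_simp
  · rw [Metric.dense_iff]
    intro b r hr
    set a : Fin (n + 1) → A := Fin.snoc b 1 with haa
    have ha : a ∈ Lg A (n + 1) := by
      refine ⟨Fin.snoc (0 : Fin n → A) 1, ?_⟩
      rw [Fin.sum_univ_castSucc]
      simp [haa]
    obtain ⟨c, hc, hmem⟩ := hssr r hr a ha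
    refine ⟨fun i => a i.castSucc + c i * a (Fin.last n), ?_, hmem⟩
    rw [Metric.mem_ball, dist_pi_lt_iff hr]
    intro i
    simp only [haa, Fin.snoc_castSucc, Fin.snoc_last, mul_one]
    simpa [dist_eq_norm] using hc i
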